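/- Let β ≥ 0. For every u ∈ [0,1/2] one has e^{-2β} ≤ f_β(u) ≤ 1, and consequently F_β is Lipschitz with constant 2β on [0,1]: |F_β(s) − F_β(t)| ≤ 2β |s − t| for all s, t ∈ [0,1]. -/
import Mathlib

/-- `f_β(u) = (e^{-2β}(1-2u) + √(1 + (e^{-4β}-1)(1-2u)²)) / (2(1-u))`. -/
noncomputable def fBeta (β u : ℝ) : ℝ :=
  (Real.exp (-2*β) * (1-2*u) + Real.sqrt (1 + (Real.exp (-4*β) - 1) * (1-2*u)^2)) / (2*(1-u))

/-- `F_β(t) = ∫_0^{min(t,1-t)} log f_β(u) du`. -/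
noncomputable def FBeta (β t : ℝ) : ℝ :=
  ∫ u in (0:ℝ)..(min t (1-t)), Real.log (fBeta β u)

/-- for `β ≥ 0`, one has `e^{-2β} ≤ f_β(u) ≤ 1` for all `u ∈ [0,1/2]`, and
consequently `F_β` is `2β`-Lipschitz on `[0,1]`. -/
theorem fBeta_bounds_and_FBeta_lipschitz (β : ℝ) (hβ : 0 ≤ β) :
    (∀ u ∈ Set.Icc (0:ℝ) (1/2), Real.exp (-2*β) ≤ fBeta β u ∧ fBeta β u ≤ 1) ∧
    (∀ s ∈ Set.Icc (0:ℝ) 1, ∀ t ∈ Set.Icc (0:ℝ) 1,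
      |FBeta β s - FBeta β t| ≤ 2 * β * |s - t|) := by
  have ha0 : 0 < Real.exp (-2*β) := Real.exp_pos _
  have ha1 : Real.exp (-2*β) ≤ 1 := Real.exp_le_one_iff.mpr (by linarith)
  have hsq : Real.exp (-4*β) = Real.exp (-2*β)^2 := by
    rw [sq, ← Real.exp_add]; ring_nf
  have hbounds : ∀ u ∈ Set.Icc (0:ℝ) (1/2),
      Real.exp (-2*β) ≤ fBeta β u ∧ fBeta β u ≤ 1 := by
    rintro u ⟨hu0, hu1⟩
    have hx0 : 0 ≤ 1 - 2*u := by linarith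
    have hx1 : 1 - 2*u ≤ 1 := by linarith
    have hden : (0:ℝ) < 2*(1-u) := by linarith
    have hs1 : Real.exp (-2*β) ≤ Real.sqrt (1 + (Real.exp (-4*β) - 1) * (1-2*u)^2) := by
      have harg : Real.exp (-2*β)^2 ≤ 1 + (Real.exp (-4*β) - 1) * (1-2*u)^2 := by
        have k : 0 ≤ (1 - Real.exp (-2*β)^2)*(1-(1-2*u)^2) :=
          mul_nonneg (by nlinarith) (by nlinarith)
        rw [hsq]; nlinarith
      have := Real.sqrt_le_sqrt harg
      rwa [Real.sqrt_sq ha0.le] at this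
    have hs2 : Real.sqrt (1 + (Real.exp (-4*β) - 1) * (1-2*u)^2)
        ≤ 1 + (1 - Real.exp (-2*β))*(1-2*u) := by
      have h1 : 1 + (Real.exp (-4*β) - 1) * (1-2*u)^2
          ≤ (1 + (1 - Real.exp (-2*β))*(1-2*u))^2 := by
        rw [hsq]; nlinarith [sq_nonneg (1-2*u)]
      have := Real.sqrt_le_sqrt h1
      rwa [Real.sqrt_sq (by nlinarith)] at this
    constructor
    · rw [fBeta, le_div_iff₀ hden]; nlinarith
    · rw [fBeta, div_le_one hden]; nlinarith
  refine ⟨hbounds, ?_⟩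
  have hlogbd : ∀ u ∈ Set.Icc (0:ℝ) (1/2), |Real.log (fBeta β u)| ≤ 2*β := by
    intro u hu
    obtain ⟨hl, hr⟩ := hbounds u hu
    have hpos : 0 < fBeta β u := lt_of_lt_of_le ha0 hl
    rw [abs_le]
    constructor
    · have := Real.log_le_log ha0 hl
      rw [Real.log_exp] at this; linarith
    · have := Real.log_nonpos hpos.le hr; linarith
  have hcont : ContinuousOn (fun u => Real.log (fBeta β u)) (Set.Icc (0:ℝ) (1/2)) := by
    have h1 : ContinuousOn (fBeta β) (Set.Icc (0:ℝ) (1/2)) := by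
      apply ContinuousOn.div
      · exact Continuous.continuousOn (by continuity)
      · exact Continuous.continuousOn (by continuity)
      · rintro u ⟨hu0, hu1⟩
        have : (1:ℝ)/2 < 1 := by norm_num
        nlinarith
    exact h1.log (fun u hu => ne_of_gt (lt_of_lt_of_le ha0 (hbounds u hu).1))
  rintro s ⟨hs0, hs1⟩ t ⟨ht0, ht1⟩
  set g := fun u => Real.log (fBeta β u) with hg
  have hmem : ∀ x : ℝ, 0 ≤ x → x ≤ 1 → min x (1-x) ∈ Set.Icc (0:ℝ) (1/2) := by
    intro x h0 h1
    constructor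
    · exact le_min h0 (by linarith)
    · rcases le_total x (1/2) with h | h
      · exact le_trans (min_le_left _ _) h
      · exact le_trans (min_le_right _ _) (by linarith)
  have hms := hmem s hs0 hs1
  have hmt := hmem t ht0 ht1
  have h0m : (0:ℝ) ∈ Set.Icc (0:ℝ) (1/2) := by norm_num
  have hIcc : Set.Icc (0:ℝ) (1/2) = Set.uIcc (0:ℝ) (1/2) := (Set.uIcc_of_le (by norm_num)).symm
  have hint : ∀ c ∈ Set.Icc (0:ℝ) (1/2), ∀ b ∈ Set.Icc (0:ℝ) (1/2),
      IntervalIntegrable g MeasureTheory.volume c b := by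
    intro c hc b hb
    apply ContinuousOn.intervalIntegrable
    apply hcont.mono
    rw [hIcc] at hc hb ⊢
    exact Set.uIcc_subset_uIcc hc hb
  have hdiff : FBeta β s - FBeta β t
      = ∫ u in (min t (1-t))..(min s (1-s)), g u := by
    rw [FBeta, FBeta]
    exact intervalIntegral.integral_interval_sub_left (hint 0 h0m _ hms) (hint 0 h0m _ hmt)
  rw [hdiff]
  have hb1 : |∫ u in (min t (1-t))..(min s (1-s)), g u|
      ≤ 2*β * |min s (1-s) - min t (1-t)| := by
    rw [← Real.norm_eq_abs]
    apply intervalIntegral.norm_integral_le_of_norm_le_const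
    intro x hx
    rw [Real.norm_eq_abs]
    apply hlogbd
    have hsub : Set.uIoc (min t (1-t)) (min s (1-s)) ⊆ Set.Icc (0:ℝ) (1/2) := by
      refine le_trans Set.uIoc_subset_uIcc ?_
      rw [hIcc]
      exact Set.uIcc_subset_uIcc (hIcc ▸ hmt) (hIcc ▸ hms)
    exact hsub hx
  refine le_trans hb1 ?_
  have hmin : |min s (1-s) - min t (1-t)| ≤ |s - t| := by
    have := abs_min_sub_min_le_max s (1-s) t (1-t)
    have h2 : |(1-s) - (1-t)| = |s - t| := by rw [show (1-s)-(1-t) = -(s-t) by ring, abs_neg]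
    rw [h2, max_self] at this
    exact this
  have h2b : 0 ≤ 2*β := by linarith
  calc 2*β * |min s (1-s) - min t (1-t)| ≤ 2*β * |s-t| := by
        exact mul_le_mul_of_nonneg_left hmin h2b
    _ = 2 * β * |s - t| := by ring
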